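/- Let f = f₁⊘f₀ be a nonconstant tropical meromorphic function with reduced representation f = [f₀:f₁] and limsup_{r→∞} (log T_f(r))/r = 0. Then for every a ∈ ℝ such that f⊕a ≢ a (i.e. f(x) > a for some x ∈ ℝ), the defect δ_f(a) = 1 − limsup_{r→∞} N(r, 1₀⊘(P_a∘f))/T_f(r) equals 0, where P_a(x₀,x₁) = max(a+x₀, x₁), so that (P_a∘f)(x) = max(a+f₀(x), f₁(x)). -/

import Mathlib

open Filter MeasureTheory Topology
open scoped Classical

noncomputable section

namespace TropNev

/-- `f` is tropical meromorphic: continuous and piecewise linear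
(affine on a small interval on each side of every point). -/
def IsTropMero (f : ℝ → ℝ) : Prop :=
  Continuous f ∧ ∀ x : ℝ, ∃ ε > (0:ℝ), ∃ sR sL : ℝ,
    (∀ t ∈ Set.Icc x (x + ε), f t = f x + sR * (t - x)) ∧
    (∀ t ∈ Set.Icc (x - ε) x, f t = f x + sL * (t - x))

/-- ω_f(x): right derivative minus left derivative. -/
def omega (f : ℝ → ℝ) (x : ℝ) : ℝ :=
  derivWithin f (Set.Ici x) x - derivWithin f (Set.Iic x) x

/-- tropical entire: tropical meromorphic with no poles. -/
def IsTropEntire (f : ℝ → ℝ) : Prop :=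
  IsTropMero f ∧ ∀ x : ℝ, 0 ≤ omega f x

/-- tropical proximity function m(r,f). -/
def prox (f : ℝ → ℝ) (r : ℝ) : ℝ := (max (f r) 0 + max (f (-r)) 0) / 2

/-- tropical counting function of poles N(r,f). -/
def countN (f : ℝ → ℝ) (r : ℝ) : ℝ :=
  (1 / 2) * ∑' b : ℝ, if |b| < r ∧ omega f b < 0 then -omega f b * (r - |b|) else 0

/-- N(r, 1₀ ⊘ g): counting function of the roots of g. -/
def countNroots (g : ℝ → ℝ) (r : ℝ) : ℝ := countN (fun x => -g x) r

/-- tropical Nevanlinna characteristic T(r,f). -/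
def charT (f : ℝ → ℝ) (r : ℝ) : ℝ := prox f r + countN f r

/-- limsup_{r→∞} h(r) = 0 (in the real-analysis sense). -/
def LimsupZero (h : ℝ → ℝ) : Prop :=
  (∀ ε : ℝ, 0 < ε → ∀ᶠ r : ℝ in atTop, h r < ε) ∧
  (∀ ε : ℝ, 0 < ε → ∃ᶠ r : ℝ in atTop, -ε < h r)

/-- liminf_{r→∞} h(r) = 0 (in the real-analysis sense). -/
def LiminfZero (h : ℝ → ℝ) : Prop :=
  (∀ ε : ℝ, 0 < ε → ∃ᶠ r : ℝ in atTop, h r < ε) ∧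
  (∀ ε : ℝ, 0 < ε → ∀ᶠ r : ℝ in atTop, -ε < h r)

/-- E ⊆ [1,∞) has zero upper density. -/
def ZeroUpperDensity (E : Set ℝ) : Prop :=
  LimsupZero fun r => (volume (E ∩ Set.Icc 1 r)).toReal / r

/-- E ⊆ [1,∞) has zero lower density. -/
def ZeroLowerDensity (E : Set ℝ) : Prop :=
  LiminfZero fun r => (volume (E ∩ Set.Icc 1 r)).toReal / r

/-- max of finitely many reals. -/
def tmax {m : ℕ} (F : Fin (m + 1) → ℝ) : ℝ :=
  Finset.univ.sup' Finset.univ_nonempty F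

/-- tropical holomorphic curve with reduced representation f₀,…,f_n :
all components tropical entire, with no common roots. -/
def IsTropCurve {n : ℕ} (f : Fin (n + 1) → ℝ → ℝ) : Prop :=
  (∀ k, IsTropEntire (f k)) ∧ ∀ x : ℝ, ∃ k, ¬ 0 < omega (f k) x

/-- tropical Cartan characteristic T_f(r). -/
def curveT {n : ℕ} (f : Fin (n + 1) → ℝ → ℝ) (r : ℝ) : ℝ :=
  (tmax (fun k => f k r) + tmax (fun k => f k (-r))) / 2 - tmax fun k => f k 0

/-- homogeneous tropical polynomial of degree d in the variables x₀,…,x_n,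
with coefficients in ℝ ∪ {−∞} indexed by the degree-d monomials
(i.e. multisets of size d over the variables), not all −∞. -/
structure TropPoly (n d : ℕ) where
  coeff : Sym (Fin (n + 1)) d → EReal
  nontriv : ∃ s, coeff s ≠ ⊥

/-- value of the monomial term c_I + i₀x₀+⋯+i_nx_n. -/
def TropPoly.term {n d : ℕ} (P : TropPoly n d) (s : Sym (Fin (n + 1)) d)
    (x : Fin (n + 1) → ℝ) : EReal :=
  P.coeff s + (((Multiset.map x (s : Multiset (Fin (n + 1)))).sum : ℝ) : EReal)

def TropPoly.evalE {n d : ℕ} (P : TropPoly n d) (x : Fin (n + 1) → ℝ) : EReal :=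
  Finset.univ.sup fun s => P.term s x

/-- the tropical hypersurface V_P : points where the maximum is attained
by at least two monomials. -/
def TropPoly.hyp {n d : ℕ} (P : TropPoly n d) : Set (Fin (n + 1) → ℝ) :=
  {x | ∃ s t : Sym (Fin (n + 1)) d, s ≠ t ∧
        P.term s x = P.evalE x ∧ P.term t x = P.evalE x}

/-- the composition P ∘ f. -/
def TropPoly.compo {n d : ℕ} (P : TropPoly n d) (f : Fin (n + 1) → ℝ → ℝ) : ℝ → ℝ :=
  fun t => (P.evalE fun k => f k t).toReal

/-- ‖a‖ = max_I c_I for the coefficient vector of P. -/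
def TropPoly.coeffNorm {n d : ℕ} (P : TropPoly n d) : ℝ :=
  (Finset.univ.sup fun s => P.coeff s).toReal

/-- tropical Weil function λ_{V_P}(f(x)) = d‖f(x)‖ + d‖a‖ − (P∘f)(x). -/
def weil {n d : ℕ} (P : TropPoly n d) (f : Fin (n + 1) → ℝ → ℝ) (x : ℝ) : ℝ :=
  d * tmax (fun k => f k x) + d * P.coeffNorm - P.compo f x

/-- proximity function m_f(r, V_P). -/
def proxCurve {n d : ℕ} (f : Fin (n + 1) → ℝ → ℝ) (P : TropPoly n d) (r : ℝ) : ℝ :=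
  (weil P f r + weil P f (-r)) / 2

/-- f is tropical algebraically nondegenerate. -/
def AlgNondeg {n : ℕ} (f : Fin (n + 1) → ℝ → ℝ) : Prop :=
  ∀ d : ℕ, 1 ≤ d → ∀ P : TropPoly n d, ∃ t : ℝ, (fun k => f k t) ∉ P.hyp

/-- f is tropical linearly nondegenerate. -/
def LinNondeg {n : ℕ} (f : Fin (n + 1) → ℝ → ℝ) : Prop :=
  ∀ P : TropPoly n 1, ∃ t : ℝ, (fun k => f k t) ∉ P.hyp

/-- Gondran–Minoux linear independence of a finite family of real functions. -/
def GMLinIndep {ι : Type*} [Fintype ι] [DecidableEq ι] (g : ι → ℝ → ℝ) : Prop :=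
  ¬ ∃ (I J : Finset ι) (a : ι → EReal),
      I.Nonempty ∧ J.Nonempty ∧ Disjoint I J ∧ I ∪ J = Finset.univ ∧
      (∃ i, a i ≠ ⊥) ∧
      ∀ x : ℝ, (I.sup fun i => a i + ((g i x : ℝ) : EReal)) =
        (J.sup fun j => a j + ((g j x : ℝ) : EReal))

/-- the degree-d tropical monomials f^I in f₀,…,f_n. -/
def monos {n : ℕ} (f : Fin (n + 1) → ℝ → ℝ) (d : ℕ) :
    Sym (Fin (n + 1)) d → ℝ → ℝ :=
  fun s x => (Multiset.map (fun k => f k x) (s : Multiset (Fin (n + 1)))).sum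

/-- Gondran–Minoux algebraic independence. -/
def GMAlgIndep {n : ℕ} (f : Fin (n + 1) → ℝ → ℝ) : Prop :=
  ∀ d : ℕ, 1 ≤ d → GMLinIndep (monos f d)

/-- F is a complete tropical linear combination of the family h :
every tropical-linear representation of F over h has all coefficients finite. -/
def TropComplete {ι : Type*} [Fintype ι] (h : ι → ℝ → ℝ) (F : ℝ → ℝ) : Prop :=
  ∀ a : ι → EReal,
    (∀ x : ℝ, ((F x : ℝ) : EReal) = Finset.univ.sup fun k => a k + ((h k x : ℝ) : EReal)) →
    ∀ k, a k ≠ ⊥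

/-- the tropical Casoratian with shift c. -/
def casorati {m : ℕ} (c : ℝ) (g : Fin (m + 1) → ℝ → ℝ) : ℝ → ℝ := fun x =>
  Finset.univ.sup' Finset.univ_nonempty
    fun π : Equiv.Perm (Fin (m + 1)) => ∑ j, g j (x + ((π j : ℕ) : ℝ) * c)

/-- tropical Cartan characteristic for a reduced representation [f₀:f₁] in TP¹. -/
def charT2 (f0 f1 : ℝ → ℝ) (r : ℝ) : ℝ :=
  (max (f0 r) (f1 r) + max (f0 (-r)) (f1 (-r))) / 2 - max (f0 0) (f1 0)

/-- reduced representation in TP¹: f₀, f₁ tropical entire with no common roots. -/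
def ReducedPair (f0 f1 : ℝ → ℝ) : Prop :=
  IsTropEntire f0 ∧ IsTropEntire f1 ∧ ∀ x : ℝ, ¬ (0 < omega f0 x ∧ 0 < omega f1 x)

/-- (P∘f)(x) = max(a₀+f₀(x), a₁+f₁(x)) for a TP¹ value [a₁:a₀]. -/
def pcomp (a0 a1 : EReal) (f0 f1 : ℝ → ℝ) : ℝ → ℝ := fun x =>
  ((a0 + ((f0 x : ℝ) : EReal)) ⊔ (a1 + ((f1 x : ℝ) : EReal))).toReal

/-- defect of a tropical holomorphic curve with respect to a tropical hypersurface. -/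
def curveDefect {n d : ℕ} (f : Fin (n + 1) → ℝ → ℝ) (P : TropPoly n d) : ℝ :=
  1 - Filter.limsup (fun r => countNroots (P.compo f) r / (d * curveT f r)) atTop

end TropNev

end



noncomputable section
namespace TropNev
open Set

/-- right slope -/
def sR (f : ℝ → ℝ) (x : ℝ) : ℝ := derivWithin f (Set.Ici x) x
def sL (f : ℝ → ℝ) (x : ℝ) : ℝ := derivWithin f (Set.Iic x) x

lemma omega_eq (f : ℝ → ℝ) (x : ℝ) : omega f x = sR f x - sL f x := rfl

lemma slope_right {h : ℝ → ℝ} {x ε s : ℝ} (hε : 0 < ε)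
    (haff : ∀ t ∈ Set.Icc x (x + ε), h t = h x + s * (t - x)) :
    sR h x = s := by
  have haf : HasDerivWithinAt (fun t => h x + s * (t - x)) s (Set.Ici x) x := by
    simpa using (((hasDerivWithinAt_id x (Set.Ici x)).sub_const x).const_mul s).const_add (h x)
  have hmem : Set.Icc x (x + ε) ∈ nhdsWithin x (Set.Ici x) :=
    Icc_mem_nhdsGE_of_mem (by constructor <;> [exact le_refl x; linarith])
  have hev : h =ᶠ[nhdsWithin x (Set.Ici x)] fun t => h x + s * (t - x) :=
    Filter.eventuallyEq_of_mem hmem haff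
  have : HasDerivWithinAt h s (Set.Ici x) x :=
    haf.congr_of_eventuallyEq hev (by simp)
  exact this.derivWithin (uniqueDiffOn_Ici x x Set.self_mem_Ici)

lemma slope_left {h : ℝ → ℝ} {x ε s : ℝ} (hε : 0 < ε)
    (haff : ∀ t ∈ Set.Icc (x - ε) x, h t = h x + s * (t - x)) :
    sL h x = s := by
  have haf : HasDerivWithinAt (fun t => h x + s * (t - x)) s (Set.Iic x) x := by
    simpa using (((hasDerivWithinAt_id x (Set.Iic x)).sub_const x).const_mul s).const_add (h x)
  have hmem : Set.Icc (x - ε) x ∈ nhdsWithin x (Set.Iic x) :=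
    Icc_mem_nhdsLE_of_mem (by constructor <;> [linarith; exact le_refl x])
  have hev : h =ᶠ[nhdsWithin x (Set.Iic x)] fun t => h x + s * (t - x) :=
    Filter.eventuallyEq_of_mem hmem haff
  have : HasDerivWithinAt h s (Set.Iic x) x :=
    haf.congr_of_eventuallyEq hev (by simp)
  exact this.derivWithin (uniqueDiffOn_Iic x x Set.self_mem_Iic)

/-- canonical local affine data -/
lemma exists_aff {h : ℝ → ℝ} (hm : IsTropMero h) (x : ℝ) :
    ∃ ε > (0:ℝ),
      (∀ t ∈ Set.Icc x (x + ε), h t = h x + sR h x * (t - x)) ∧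
      (∀ t ∈ Set.Icc (x - ε) x, h t = h x + sL h x * (t - x)) := by
  obtain ⟨ε, hε, s1, s2, hR, hL⟩ := hm.2 x
  refine ⟨ε, hε, ?_, ?_⟩
  · rwa [slope_right hε hR]
  · rwa [slope_left hε hL]

lemma noKink {h : ℝ → ℝ} (hm : IsTropMero h) {u v : ℝ} (huv : u < v)
    (hk : ∀ b ∈ Set.Ioo u v, omega h b = 0) :
    (∀ t ∈ Set.Icc u v, h t = h u + sR h u * (t - u)) ∧ sL h v = sR h u := by
  have key : ∀ t ∈ Set.Icc u v, h t = h u + sR h u * (t - u) := by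
    let P : ℝ → Prop := fun t => t ∈ Set.Icc u v ∧ t ≤ v ∧
      ∀ w, u ≤ w → w ≤ t → h w = h u + sR h u * (w - u)
    have huS : P u := ⟨⟨le_refl u, le_of_lt huv⟩, le_of_lt huv, fun w hw1 hw2 => by
      have hwu : w = u := le_antisymm hw2 hw1
      rw [hwu]; ring⟩
    have hbdd : BddAbove {t | P t} := ⟨v, fun t ht => ht.1.2⟩
    have hne : Set.Nonempty {t | P t} := ⟨u, huS⟩
    have hcv : sSup {t | P t} ≤ v := csSup_le hne fun t ht => ht.1.2
    generalize hc : sSup {t | P t} = c at hcv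
    have huc : u ≤ c := hc ▸ le_csSup hbdd huS
    have hlt : ∀ w, u ≤ w → w < c → h w = h u + sR h u * (w - u) := by
      intro w hw hwc
      rw [← hc] at hwc
      obtain ⟨t, htS, hwt⟩ := exists_lt_of_lt_csSup hne hwc
      exact htS.2.2 w hw (le_of_lt hwt)
    have hceq : h c = h u + sR h u * (c - u) := by
      rcases lt_or_eq_of_le huc with hucs | hue
      · have hcl : IsClosed {z : ℝ | h z = h u + sR h u * (z - u)} :=
          isClosed_eq hm.1
            (continuous_const.add (continuous_const.mul (continuous_id.sub continuous_const)))
        have hsub : Set.Ico u c ⊆ {z : ℝ | h z = h u + sR h u * (z - u)} :=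
          fun z hz => hlt z hz.1 hz.2
        have hwcl : c ∈ closure (Set.Ico u c) := by
          rw [closure_Ico (ne_of_lt hucs)]
          exact ⟨le_of_lt hucs, le_refl c⟩
        exact (closure_minimal hsub hcl) hwcl
      · rw [← hue]; ring
    have hcS : P c := by
      refine ⟨⟨huc, hcv⟩, hcv, fun w hw1 hw2 => ?_⟩
      rcases lt_or_eq_of_le hw2 with hlt' | heq
      · exact hlt w hw1 hlt'
      · rw [heq]; exact hceq
    have hcs : c = v := by
      by_contra hnev
      have hcv' : c < v := lt_of_le_of_ne hcv hnev
      obtain ⟨ε, hε, hRc, _⟩ := exists_aff hm c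
      have hsRc : sR h c = sR h u := by
        rcases lt_or_eq_of_le huc with hucs | hue
        · have hsLc : sL h c = sR h u := by
            have hδpos : (0:ℝ) < min ε (c - u) := lt_min hε (by linarith)
            refine slope_left hδpos fun t ht => ?_
            have ht1 : u ≤ t := by
              have h1 : c - min ε (c - u) ≤ t := ht.1
              have h2 : min ε (c - u) ≤ c - u := min_le_right ε (c - u)
              linarith
            have h1 : h t = h u + sR h u * (t - u) := hcS.2.2 t ht1 ht.2
            rw [h1, hceq]; ring
          have hω : omega h c = 0 := hk c ⟨hucs, hcv'⟩
          rw [omega_eq] at hω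
          linarith
        · rw [← hue]
      have hcc' : c < min (c + ε) v := lt_min (by linarith) hcv'
      have hc'S : P (min (c + ε) v) := by
        refine ⟨⟨le_trans huc (le_of_lt hcc'), min_le_right _ _⟩, min_le_right _ _,
          fun w hw1 hw2 => ?_⟩
        rcases le_or_gt w c with hwc | hwc
        · exact hcS.2.2 w hw1 hwc
        · have hwε : w ∈ Set.Icc c (c + ε) :=
            ⟨le_of_lt hwc, le_trans hw2 (min_le_left _ _)⟩
          have hrw := hRc w hwε
          rw [hrw, hsRc, hceq]; ring
      have hle := le_csSup hbdd hc'S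
      rw [hc] at hle
      linarith
    intro t ht
    exact hcS.2.2 t ht.1 (hcs ▸ ht.2)
  refine ⟨key, ?_⟩
  have hvu : (0:ℝ) < v - u := by linarith
  refine slope_left hvu fun t ht => ?_
  have h1 : h t = h u + sR h u * (t - u) := key t ⟨by linarith [ht.1], ht.2⟩
  have h2 : h v = h u + sR h u * (v - u) := key v ⟨le_of_lt huv, le_refl v⟩
  rw [h1, h2]; ring

lemma lemA {h : ℝ → ℝ} (hm : IsTropMero h) :
    ∀ (K : Finset ℝ) (u v : ℝ), u ≤ v →
      (∀ b, b ∈ K ↔ (b ∈ Set.Ioo u v ∧ omega h b ≠ 0)) →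
      h v - h u = sR h u * (v - u) + ∑ b ∈ K, omega h b * (v - b) := by
  intro K
  induction K using Finset.strongInduction with
  | _ K ih =>
    intro u v huv hK
    rcases K.eq_empty_or_nonempty with hKe | hKne
    · subst hKe
      simp only [Finset.sum_empty, add_zero]
      rcases lt_or_eq_of_le huv with hlt | heq
      · have hk : ∀ b ∈ Set.Ioo u v, omega h b = 0 := by
          intro b hb
          by_contra hne
          exact (Finset.notMem_empty b) ((hK b).2 ⟨hb, hne⟩)
        have := (noKink hm hlt hk).1 v ⟨le_of_lt hlt, le_refl v⟩
        linarith
      · rw [heq]; ring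
    · set b := K.min' hKne with hb
      have hbK : b ∈ K := K.min'_mem hKne
      have hbIoo : b ∈ Set.Ioo u v := ((hK b).1 hbK).1
      have hub : u < b := hbIoo.1
      have hbv : b < v := hbIoo.2
      -- no kinks in (u, b)
      have hk1 : ∀ c ∈ Set.Ioo u b, omega h c = 0 := by
        intro c hc
        by_contra hne
        have hcK : c ∈ K := (hK c).2 ⟨⟨hc.1, lt_trans hc.2 hbv⟩, hne⟩
        have := K.min'_le c hcK
        rw [← hb] at this
        linarith [hc.2]
      obtain ⟨haff, hsLb⟩ := noKink hm hub hk1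
      have h1 : h b - h u = sR h u * (b - u) := by
        have := haff b ⟨le_of_lt hub, le_refl b⟩
        linarith
      have hsRb : sR h b = sR h u + omega h b := by
        rw [omega_eq, hsLb]; ring
      have hK' : ∀ c, c ∈ K.erase b ↔ (c ∈ Set.Ioo b v ∧ omega h c ≠ 0) := by
        intro c
        rw [Finset.mem_erase]
        constructor
        · rintro ⟨hcb, hcK⟩
          obtain ⟨hcIoo, hcω⟩ := (hK c).1 hcK
          have : b ≤ c := hb ▸ K.min'_le c hcK
          exact ⟨⟨lt_of_le_of_ne this (Ne.symm hcb), hcIoo.2⟩, hcω⟩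
        · rintro ⟨hcIoo, hcω⟩
          refine ⟨ne_of_gt hcIoo.1, (hK c).2 ⟨⟨lt_trans hub hcIoo.1, hcIoo.2⟩, hcω⟩⟩
      have ih' := ih (K.erase b) (Finset.erase_ssubset hbK) b v (le_of_lt hbv) hK'
      have hsum : ∑ c ∈ K.erase b, omega h c * (v - c) + omega h b * (v - b)
          = ∑ c ∈ K, omega h c * (v - c) := Finset.sum_erase_add K _ hbK
      rw [hsRb] at ih'
      linarith [ih', h1, hsum]

lemma lemA' {h : ℝ → ℝ} (hm : IsTropMero h) :
    ∀ (K : Finset ℝ) (u v : ℝ), u ≤ v →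
      (∀ b, b ∈ K ↔ (b ∈ Set.Ioo u v ∧ omega h b ≠ 0)) →
      h v - h u = sL h v * (v - u) - ∑ b ∈ K, omega h b * (b - u) := by
  intro K
  induction K using Finset.strongInduction with
  | _ K ih =>
    intro u v huv hK
    rcases K.eq_empty_or_nonempty with hKe | hKne
    · subst hKe
      simp only [Finset.sum_empty, sub_zero]
      rcases lt_or_eq_of_le huv with hlt | heq
      · have hk : ∀ b ∈ Set.Ioo u v, omega h b = 0 := by
          intro b hb
          by_contra hne
          exact (Finset.notMem_empty b) ((hK b).2 ⟨hb, hne⟩)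
        obtain ⟨haff, hsLv⟩ := noKink hm hlt hk
        have := haff v ⟨le_of_lt hlt, le_refl v⟩
        rw [hsLv]
        linarith
      · rw [heq]; ring
    · set b := K.max' hKne with hb
      have hbK : b ∈ K := K.max'_mem hKne
      have hbIoo : b ∈ Set.Ioo u v := ((hK b).1 hbK).1
      have hub : u < b := hbIoo.1
      have hbv : b < v := hbIoo.2
      have hk1 : ∀ c ∈ Set.Ioo b v, omega h c = 0 := by
        intro c hc
        by_contra hne
        have hcK : c ∈ K := (hK c).2 ⟨⟨lt_trans hub hc.1, hc.2⟩, hne⟩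
        have := K.le_max' c hcK
        rw [← hb] at this
        linarith [hc.1]
      obtain ⟨haff, hsLv⟩ := noKink hm hbv hk1
      have h1 : h v - h b = sR h b * (v - b) := by
        have := haff v ⟨le_of_lt hbv, le_refl v⟩
        linarith
      have hsRb : sR h b = sL h b + omega h b := by rw [omega_eq]; ring
      have hK' : ∀ c, c ∈ K.erase b ↔ (c ∈ Set.Ioo u b ∧ omega h c ≠ 0) := by
        intro c
        rw [Finset.mem_erase]
        constructor
        · rintro ⟨hcb, hcK⟩
          obtain ⟨hcIoo, hcω⟩ := (hK c).1 hcK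
          have : c ≤ b := hb ▸ K.le_max' c hcK
          exact ⟨⟨hcIoo.1, lt_of_le_of_ne this hcb⟩, hcω⟩
        · rintro ⟨hcIoo, hcω⟩
          refine ⟨ne_of_lt hcIoo.2, (hK c).2 ⟨⟨hcIoo.1, lt_trans hcIoo.2 hbv⟩, hcω⟩⟩
      have ih' := ih (K.erase b) (Finset.erase_ssubset hbK) u b (le_of_lt hub) hK'
      have hsum : ∑ c ∈ K.erase b, omega h c * (c - u) + omega h b * (b - u)
          = ∑ c ∈ K, omega h c * (c - u) := Finset.sum_erase_add K _ hbK
      rw [hsLv, hsRb]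
      linear_combination ih' + h1 - hsum + (v - b) * hsRb

lemma kinks_finite {h : ℝ → ℝ} (hm : IsTropMero h) (R : ℝ) :
    {b | b ∈ Set.Icc (-R) R ∧ omega h b ≠ 0}.Finite := by
  choose ε hε hRaff hLaff using fun x => exists_aff hm x
  have hloc : ∀ x : ℝ, ∀ b ∈ Set.Ioo (x - ε x) (x + ε x), b ≠ x → omega h b = 0 := by
    intro x b hb hbx
    rcases lt_or_gt_of_ne hbx with hlt | hgt
    · -- b < x : use left data of x
      have hsRb : sR h b = sL h x := by
        have hδ : (0:ℝ) < x - b := by linarith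
        refine slope_right hδ fun t ht => ?_
        have ht' : t ∈ Set.Icc (x - ε x) x := ⟨by linarith [ht.1, hb.1], by linarith [ht.2]⟩
        have hb' : b ∈ Set.Icc (x - ε x) x := ⟨le_of_lt hb.1, le_of_lt hlt⟩
        rw [hLaff x t ht', hLaff x b hb']; ring
      have hsLb : sL h b = sL h x := by
        have hδ : (0:ℝ) < b - (x - ε x) := by linarith [hb.1]
        refine slope_left hδ fun t ht => ?_
        have ht' : t ∈ Set.Icc (x - ε x) x := ⟨by linarith [ht.1], by linarith [ht.2]⟩
        have hb' : b ∈ Set.Icc (x - ε x) x := ⟨le_of_lt hb.1, le_of_lt hlt⟩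
        rw [hLaff x t ht', hLaff x b hb']; ring
      rw [omega_eq, hsRb, hsLb]; ring
    · -- b > x : use right data of x
      have hsRb : sR h b = sR h x := by
        have hδ : (0:ℝ) < x + ε x - b := by linarith [hb.2]
        refine slope_right hδ fun t ht => ?_
        have ht' : t ∈ Set.Icc x (x + ε x) := ⟨by linarith [ht.1], by linarith [ht.2]⟩
        have hb' : b ∈ Set.Icc x (x + ε x) := ⟨le_of_lt hgt, le_of_lt hb.2⟩
        rw [hRaff x t ht', hRaff x b hb']; ring
      have hsLb : sL h b = sR h x := by
        have hδ : (0:ℝ) < b - x := by linarith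
        refine slope_left hδ fun t ht => ?_
        have ht' : t ∈ Set.Icc x (x + ε x) := ⟨by linarith [ht.1], by linarith [ht.2, hb.2]⟩
        have hb' : b ∈ Set.Icc x (x + ε x) := ⟨le_of_lt hgt, le_of_lt hb.2⟩
        rw [hRaff x t ht', hRaff x b hb']; ring
      rw [omega_eq, hsRb, hsLb]; ring
  have hcover : Set.Icc (-R) R ⊆ ⋃ x : ℝ, Set.Ioo (x - ε x) (x + ε x) := by
    intro y hy
    exact Set.mem_iUnion.2 ⟨y, Set.mem_Ioo.2 ⟨by linarith [hε y], by linarith [hε y]⟩⟩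
  obtain ⟨t, ht⟩ := isCompact_Icc.elim_finite_subcover
    (fun x : ℝ => Set.Ioo (x - ε x) (x + ε x)) (fun x => isOpen_Ioo) hcover
  apply Set.Finite.subset t.finite_toSet
  rintro b ⟨hbIcc, hbω⟩
  have hb2 := ht hbIcc
  rw [Set.mem_iUnion₂] at hb2
  obtain ⟨x, hxt, hbx⟩ := hb2
  rcases eq_or_ne b x with heq | hne
  · rwa [heq]
  · exact absurd (hloc x b hbx hne) hbω

lemma omega_neg {h : ℝ → ℝ} (hm : IsTropMero h) (x : ℝ) :
    omega (fun y => -h y) x = -omega h x := by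
  obtain ⟨ε, hε, hR, hL⟩ := exists_aff hm x
  have h1 : sR (fun y => -h y) x = -sR h x :=
    slope_right hε fun t ht => by rw [hR t ht]; ring
  have h2 : sL (fun y => -h y) x = -sL h x :=
    slope_left hε fun t ht => by rw [hL t ht]; ring
  show sR (fun y => -h y) x - sL (fun y => -h y) x = -(sR h x - sL h x)
  rw [h1, h2]; ring

/-- the Jensen-type formula for a finite kink set in (-r, r) -/
lemma jensen_sum {h : ℝ → ℝ} (hm : IsTropMero h) {r : ℝ} (hr : 0 < r) (K : Finset ℝ)
    (hK : ∀ b, b ∈ K ↔ (b ∈ Set.Ioo (-r) r ∧ omega h b ≠ 0)) :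
    h r + h (-r) - 2 * h 0 = ∑ b ∈ K, omega h b * (r - |b|) := by
  classical
  set Kp := K.filter (fun b => 0 < b) with hKp
  set Kn := K.filter (fun b => b < 0) with hKn
  set Kz := K.filter (fun b => ¬ 0 < b ∧ ¬ b < 0) with hKz
  have hA := lemA hm Kp 0 r (le_of_lt hr) (by
    intro b
    rw [hKp, Finset.mem_filter, hK b]
    constructor
    · rintro ⟨⟨hIo, hω⟩, hpos⟩; exact ⟨⟨hpos, hIo.2⟩, hω⟩
    · rintro ⟨hIo, hω⟩; exact ⟨⟨⟨by linarith [hIo.1], hIo.2⟩, hω⟩, hIo.1⟩)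
  have hA' := lemA' hm Kn (-r) 0 (by linarith) (by
    intro b
    rw [hKn, Finset.mem_filter, hK b]
    constructor
    · rintro ⟨⟨hIo, hω⟩, hneg⟩; exact ⟨⟨hIo.1, hneg⟩, hω⟩
    · rintro ⟨hIo, hω⟩; exact ⟨⟨⟨hIo.1, by linarith [hIo.2]⟩, hω⟩, hIo.2⟩)
  -- split the sum
  have hsplit : ∑ b ∈ K, omega h b * (r - |b|)
      = ∑ b ∈ Kp, omega h b * (r - |b|) + ∑ b ∈ Kn, omega h b * (r - |b|)
        + ∑ b ∈ Kz, omega h b * (r - |b|) := by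
    have h1 := Finset.sum_filter_add_sum_filter_not K (fun b => 0 < b)
      (fun b => omega h b * (r - |b|))
    have h2 := Finset.sum_filter_add_sum_filter_not (K.filter (fun b => ¬ 0 < b))
      (fun b => b < 0) (fun b => omega h b * (r - |b|))
    have e1 : (K.filter (fun b => ¬ 0 < b)).filter (fun b => b < 0) = Kn := by
      rw [hKn]; ext b
      simp only [Finset.mem_filter]
      constructor
      · rintro ⟨⟨hbK, _⟩, hb2⟩; exact ⟨hbK, hb2⟩
      · rintro ⟨hbK, hb2⟩; exact ⟨⟨hbK, by linarith⟩, hb2⟩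
    have e2 : (K.filter (fun b => ¬ 0 < b)).filter (fun b => ¬ b < 0) = Kz := by
      rw [hKz]; ext b
      simp only [Finset.mem_filter]
      constructor
      · rintro ⟨⟨hbK, hb1⟩, hb2⟩; exact ⟨hbK, hb1, hb2⟩
      · rintro ⟨hbK, hb1, hb2⟩; exact ⟨⟨hbK, hb1⟩, hb2⟩
    rw [e1, e2] at h2
    rw [← hKp] at h1
    linarith [h1, h2]
  have hKzval : ∑ b ∈ Kz, omega h b * (r - |b|) = omega h 0 * r := by
    have hz : Kz ⊆ {0} := by
      intro b hb
      rw [hKz, Finset.mem_filter] at hb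
      have : b = 0 := le_antisymm (not_lt.1 hb.2.1) (not_lt.1 hb.2.2)
      simp [this]
    rcases Finset.subset_singleton_iff.1 hz with he | he
    · rw [he]
      have h0K : (0:ℝ) ∉ K ∨ omega h 0 = 0 := by
        by_cases h0 : (0:ℝ) ∈ K
        · right
          by_contra hω
          have : (0:ℝ) ∈ Kz := by
            rw [hKz, Finset.mem_filter]; exact ⟨h0, by norm_num⟩
          rw [he] at this; exact absurd this (Finset.notMem_empty 0)
        · left; exact h0
      rcases h0K with h0 | h0
      · have : omega h 0 = 0 := by
          by_contra hω
          exact h0 ((hK 0).2 ⟨⟨by linarith, hr⟩, hω⟩)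
        simp [this]
      · simp [h0]
    · rw [he]; simp
  -- sums with |b| replaced
  have hp : ∑ b ∈ Kp, omega h b * (r - |b|) = ∑ b ∈ Kp, omega h b * (r - b) := by
    apply Finset.sum_congr rfl
    intro b hb
    rw [hKp, Finset.mem_filter] at hb
    rw [abs_of_pos hb.2]
  have hn : ∑ b ∈ Kn, omega h b * (r - |b|) = ∑ b ∈ Kn, omega h b * (b - (-r)) := by
    apply Finset.sum_congr rfl
    intro b hb
    rw [hKn, Finset.mem_filter] at hb
    rw [abs_of_neg hb.2]; ring_nf
  rw [hsplit, hKzval, hp, hn, omega_eq]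
  have e1 : h r - h 0 = sR h 0 * (r - 0) + ∑ b ∈ Kp, omega h b * (r - b) := hA
  have e2 : h 0 - h (-r) = sL h 0 * (0 - (-r)) - ∑ b ∈ Kn, omega h b * (b - (-r)) := hA'
  linarith [e1, e2]

/-- Jensen for entire functions, in countNroots form -/
lemma countNroots_jensen {g : ℝ → ℝ} (hg : IsTropEntire g) {r : ℝ} (hr : 0 < r) :
    countNroots g r = (g r + g (-r)) / 2 - g 0 := by
  classical
  have hfin : {b | b ∈ Set.Ioo (-r) r ∧ omega g b ≠ 0}.Finite := by
    apply (kinks_finite hg.1 r).subset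
    rintro b ⟨hb, hω⟩
    exact ⟨⟨le_of_lt hb.1, le_of_lt hb.2⟩, hω⟩
  set K := hfin.toFinset with hKdef
  have hK : ∀ b, b ∈ K ↔ (b ∈ Set.Ioo (-r) r ∧ omega g b ≠ 0) := by
    intro b; rw [hKdef, Set.Finite.mem_toFinset]; rfl
  have hjs := jensen_sum hg.1 hr K hK
  have htsum : ∑' b : ℝ, (if |b| < r ∧ omega (fun x => -g x) b < 0
      then -omega (fun x => -g x) b * (r - |b|) else 0)
      = ∑ b ∈ K, omega g b * (r - |b|) := by
    rw [tsum_eq_sum (s := K) ?_]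
    · apply Finset.sum_congr rfl
      intro b hb
      obtain ⟨hbIoo, hbω⟩ := (hK b).1 hb
      have habs : |b| < r := abs_lt.2 ⟨hbIoo.1, hbIoo.2⟩
      have hpos : 0 < omega g b := lt_of_le_of_ne (hg.2 b) (Ne.symm hbω)
      rw [if_pos ⟨habs, by rw [omega_neg hg.1]; linarith⟩, omega_neg hg.1]
      ring
    · intro b hbK
      rw [if_neg]
      rintro ⟨habs, hω⟩
      rw [omega_neg hg.1] at hω
      have hbω : omega g b ≠ 0 := by intro hz; rw [hz] at hω; simp at hω
      exact hbK ((hK b).2 ⟨abs_lt.1 habs, hbω⟩)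
  show (1/2 : ℝ) * _ = _
  rw [htsum, ← hjs]
  ring

/-- canonical finite kink set on an interval -/
lemma exists_kinkset {h : ℝ → ℝ} (hm : IsTropMero h) (u v : ℝ) :
    ∃ K : Finset ℝ, ∀ b, b ∈ K ↔ (b ∈ Set.Ioo u v ∧ omega h b ≠ 0) := by
  classical
  have hfin : {b | b ∈ Set.Ioo u v ∧ omega h b ≠ 0}.Finite := by
    apply (kinks_finite hm (max |u| |v|)).subset
    rintro b ⟨hb, hω⟩
    refine ⟨⟨?_, ?_⟩, hω⟩
    · have := neg_abs_le u
      have h2 := le_max_left |u| |v|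
      linarith [hb.1]
    · have := le_abs_self v
      have h2 := le_max_right |u| |v|
      linarith [hb.2]
  exact ⟨hfin.toFinset, fun b => by rw [Set.Finite.mem_toFinset]; rfl⟩

/-- growth lower bound to the right -/
lemma grow_right {h : ℝ → ℝ} (he : IsTropEntire h) {x v : ℝ} (hxv : x ≤ v) :
    h x + sR h x * (v - x) ≤ h v := by
  obtain ⟨K, hK⟩ := exists_kinkset he.1 x v
  have := lemA he.1 K x v hxv hK
  have hsum : 0 ≤ ∑ b ∈ K, omega h b * (v - b) := by
    apply Finset.sum_nonneg
    intro b hb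
    obtain ⟨hbIoo, _⟩ := (hK b).1 hb
    exact mul_nonneg (he.2 b) (by linarith [hbIoo.2])
  linarith

/-- growth lower bound to the left -/
lemma grow_left {h : ℝ → ℝ} (he : IsTropEntire h) {w x : ℝ} (hwx : w ≤ x) :
    h x + sL h x * (w - x) ≤ h w := by
  obtain ⟨K, hK⟩ := exists_kinkset he.1 w x
  have := lemA' he.1 K w x hwx hK
  have hsum : 0 ≤ ∑ b ∈ K, omega h b * (b - w) := by
    apply Finset.sum_nonneg
    intro b hb
    obtain ⟨hbIoo, _⟩ := (hK b).1 hb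
    exact mul_nonneg (he.2 b) (by linarith [hbIoo.1])
  linarith

/-- an entire function dominated by an affine function is affine with that slope -/
lemma entire_le_affine {h : ℝ → ℝ} (he : IsTropEntire h) (A s : ℝ)
    (hb : ∀ x, h x ≤ A + s * x) :
    ∀ x y : ℝ, h y - h x = s * (y - x) := by
  have hsR : ∀ x, sR h x ≤ s := by
    intro x
    by_contra hgt
    push_neg at hgt
    have htend : Tendsto (fun v => h x + sR h x * (v - x) - (A + s * v)) atTop atTop := by
      have : (fun v => h x + sR h x * (v - x) - (A + s * v))
          = fun v => (sR h x - s) * v + (h x - sR h x * x - A) := by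
        funext v; ring
      rw [this]
      exact tendsto_atTop_add_const_right _ _
        ((tendsto_id.const_mul_atTop (by linarith)).comp tendsto_id)
    obtain ⟨v, hv1, hv2⟩ := ((htend.eventually_gt_atTop 0).and (eventually_ge_atTop x)).exists
    have := grow_right he hv2
    have hb' := hb v
    linarith
  have hsL : ∀ x, s ≤ sL h x := by
    intro x
    by_contra hlt
    push_neg at hlt
    have htend : Tendsto (fun w => h x + sL h x * (w - x) - (A + s * w)) atBot atTop := by
      have : (fun w => h x + sL h x * (w - x) - (A + s * w))
          = fun w => (sL h x - s) * w + (h x - sL h x * x - A) := by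
        funext w; ring
      rw [this]
      apply tendsto_atTop_add_const_right
      have hneg : Tendsto (fun u : ℝ => (s - sL h x) * u) atTop atTop :=
        tendsto_id.const_mul_atTop (by linarith)
      exact (hneg.comp tendsto_neg_atBot_atTop).congr
        fun w => by simp only [Function.comp]; ring
    obtain ⟨w, hw1, hw2⟩ := ((htend.eventually_gt_atTop 0).and (eventually_le_atBot x)).exists
    have := grow_left he hw2
    have hb' := hb w
    linarith
  have hss : ∀ x, sR h x = s ∧ sL h x = s := by
    intro x
    have hω := he.2 x
    rw [omega_eq] at hω
    constructor <;> linarith [hsR x, hsL x]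
  intro x y
  rcases le_total x y with hxy | hyx
  · obtain ⟨K, hK⟩ := exists_kinkset he.1 x y
    have heq := lemA he.1 K x y hxy hK
    have hz : ∑ b ∈ K, omega h b * (y - b) = 0 := by
      apply Finset.sum_eq_zero
      intro b hb
      have := (hss b)
      rw [omega_eq, this.1, this.2]; ring
    rw [(hss x).1] at heq
    linarith
  · obtain ⟨K, hK⟩ := exists_kinkset he.1 y x
    have heq := lemA he.1 K y x hyx hK
    have hz : ∑ b ∈ K, omega h b * (x - b) = 0 := by
      apply Finset.sum_eq_zero
      intro b hb
      have := (hss b)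
      rw [omega_eq, this.1, this.2]; ring
    rw [(hss y).1] at heq
    linarith

lemma entire_const_add {h : ℝ → ℝ} (he : IsTropEntire h) (a : ℝ) :
    IsTropEntire (fun x => a + h x) := by
  obtain ⟨⟨hc, hloc⟩, hω⟩ := he
  refine ⟨⟨continuous_const.add hc, fun x => ?_⟩, fun x => ?_⟩
  · obtain ⟨ε, hε, s1, s2, hR, hL⟩ := hloc x
    exact ⟨ε, hε, s1, s2,
      fun t ht => by show a + h t = a + h x + s1 * (t - x); rw [hR t ht]; ring,
      fun t ht => by show a + h t = a + h x + s2 * (t - x); rw [hL t ht]; ring⟩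
  · obtain ⟨ε, hε, hR, hL⟩ := exists_aff ⟨hc, hloc⟩ x
    have h1 : sR (fun y => a + h y) x = sR h x :=
      slope_right hε fun t ht => by rw [hR t ht]; ring
    have h2 : sL (fun y => a + h y) x = sL h x :=
      slope_left hε fun t ht => by rw [hL t ht]; ring
    have := hω x
    rw [omega_eq] at this ⊢
    rw [h1, h2]; exact this

lemma max_slopes {h0 h1 : ℝ → ℝ} (he0 : IsTropEntire h0) (he1 : IsTropEntire h1) (x : ℝ) :
    ∃ ε > (0:ℝ), ∃ u v : ℝ,
      (∀ t ∈ Set.Icc x (x + ε), max (h0 t) (h1 t) = max (h0 x) (h1 x) + u * (t - x)) ∧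
      (∀ t ∈ Set.Icc (x - ε) x, max (h0 t) (h1 t) = max (h0 x) (h1 x) + v * (t - x)) ∧
      v ≤ u := by
  obtain ⟨ε0, hε0, hR0, hL0⟩ := exists_aff he0.1 x
  obtain ⟨ε1, hε1, hR1, hL1⟩ := exists_aff he1.1 x
  have hω0 := he0.2 x; have hω1 := he1.2 x
  rw [omega_eq] at hω0 hω1
  rcases lt_trichotomy (h0 x) (h1 x) with hlt | heq | hgt
  · -- h1 bigger near x
    have hcont : Continuous fun t => h1 t - h0 t := he1.1.1.sub he0.1.1
    have hpos : (0:ℝ) < h1 x - h0 x := by linarith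
    obtain ⟨δ, hδ, hδball⟩ := Metric.continuousAt_iff.1 hcont.continuousAt (h1 x - h0 x) hpos
    set ε := min (min ε0 ε1) (δ/2) with hεdef
    have hεpos : 0 < ε := lt_min (lt_min hε0 hε1) (by linarith)
    refine ⟨ε, hεpos, sR h1 x, sL h1 x, ?_, ?_, by linarith⟩
    · intro t ht
      have hd : dist t x < δ := by
        rw [Real.dist_eq, abs_lt]
        constructor <;> [linarith [ht.1]; linarith [ht.2, min_le_right (min ε0 ε1) (δ/2)]]
      have := hδball hd
      rw [Real.dist_eq] at this
      have h1gt : h0 t < h1 t := by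
        rcases abs_lt.1 this with ⟨hl, _⟩; linarith
      rw [max_eq_right (le_of_lt h1gt), max_eq_right (le_of_lt hlt)]
      exact hR1 t ⟨ht.1, le_trans ht.2 (by
        have := min_le_left (min ε0 ε1) (δ/2)
        have := min_le_right ε0 ε1
        have h3 : ε ≤ ε1 := le_trans (min_le_left _ _) (min_le_right _ _)
        linarith)⟩
    · intro t ht
      have hd : dist t x < δ := by
        rw [Real.dist_eq, abs_lt]
        constructor <;> [linarith [ht.1, min_le_right (min ε0 ε1) (δ/2)]; linarith [ht.2]]
      have := hδball hd
      rw [Real.dist_eq] at this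
      have h1gt : h0 t < h1 t := by
        rcases abs_lt.1 this with ⟨hl, _⟩; linarith
      rw [max_eq_right (le_of_lt h1gt), max_eq_right (le_of_lt hlt)]
      refine hL1 t ⟨?_, ht.2⟩
      have h3 : ε ≤ ε1 := le_trans (min_le_left _ _) (min_le_right _ _)
      linarith [ht.1]
  · -- equal values
    set ε := min ε0 ε1 with hεdef
    have hεpos : 0 < ε := lt_min hε0 hε1
    refine ⟨ε, hεpos, max (sR h0 x) (sR h1 x), min (sL h0 x) (sL h1 x), ?_, ?_, ?_⟩
    · intro t ht
      have ht0 : t ∈ Set.Icc x (x + ε0) := ⟨ht.1, le_trans ht.2 (by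
        have := min_le_left ε0 ε1; linarith)⟩
      have ht1 : t ∈ Set.Icc x (x + ε1) := ⟨ht.1, le_trans ht.2 (by
        have := min_le_right ε0 ε1; linarith)⟩
      have htx : 0 ≤ t - x := by linarith [ht.1]
      rw [hR0 t ht0, hR1 t ht1, heq, max_self]
      rcases le_total (sR h0 x) (sR h1 x) with hpq | hpq
      · rw [max_eq_right (by nlinarith), max_eq_right hpq]
      · rw [max_eq_left (by nlinarith), max_eq_left hpq]
    · intro t ht
      have ht0 : t ∈ Set.Icc (x - ε0) x := ⟨by
        have := min_le_left ε0 ε1; linarith [ht.1], ht.2⟩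
      have ht1 : t ∈ Set.Icc (x - ε1) x := ⟨by
        have := min_le_right ε0 ε1; linarith [ht.1], ht.2⟩
      have htx : t - x ≤ 0 := by linarith [ht.2]
      rw [hL0 t ht0, hL1 t ht1, heq, max_self]
      rcases le_total (sL h0 x) (sL h1 x) with hle | hle
      · rw [max_eq_left (by nlinarith), min_eq_left hle]
      · rw [max_eq_right (by nlinarith), min_eq_right hle]
    · have := le_max_left (sR h0 x) (sR h1 x)
      have := min_le_left (sL h0 x) (sL h1 x)
      linarith
  · -- h0 bigger near x
    have hcont : Continuous fun t => h0 t - h1 t := he0.1.1.sub he1.1.1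
    have hpos : (0:ℝ) < h0 x - h1 x := by linarith
    obtain ⟨δ, hδ, hδball⟩ := Metric.continuousAt_iff.1 hcont.continuousAt (h0 x - h1 x) hpos
    set ε := min (min ε0 ε1) (δ/2) with hεdef
    have hεpos : 0 < ε := lt_min (lt_min hε0 hε1) (by linarith)
    refine ⟨ε, hεpos, sR h0 x, sL h0 x, ?_, ?_, by linarith⟩
    · intro t ht
      have hd : dist t x < δ := by
        rw [Real.dist_eq, abs_lt]
        constructor <;> [linarith [ht.1]; linarith [ht.2, min_le_right (min ε0 ε1) (δ/2)]]
      have := hδball hd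
      rw [Real.dist_eq] at this
      have h1gt : h1 t < h0 t := by
        rcases abs_lt.1 this with ⟨hl, _⟩; linarith
      rw [max_eq_left (le_of_lt h1gt), max_eq_left (le_of_lt hgt)]
      refine hR0 t ⟨ht.1, le_trans ht.2 ?_⟩
      have h3 : ε ≤ ε0 := le_trans (min_le_left _ _) (min_le_left _ _)
      linarith
    · intro t ht
      have hd : dist t x < δ := by
        rw [Real.dist_eq, abs_lt]
        constructor <;> [linarith [ht.1, min_le_right (min ε0 ε1) (δ/2)]; linarith [ht.2]]
      have := hδball hd
      rw [Real.dist_eq] at this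
      have h1gt : h1 t < h0 t := by
        rcases abs_lt.1 this with ⟨hl, _⟩; linarith
      rw [max_eq_left (le_of_lt h1gt), max_eq_left (le_of_lt hgt)]
      refine hL0 t ⟨?_, ht.2⟩
      have h3 : ε ≤ ε0 := le_trans (min_le_left _ _) (min_le_left _ _)
      linarith [ht.1]

lemma entire_max {h0 h1 : ℝ → ℝ} (he0 : IsTropEntire h0) (he1 : IsTropEntire h1) :
    IsTropEntire (fun x => max (h0 x) (h1 x)) := by
  refine ⟨⟨he0.1.1.max he1.1.1, fun x => ?_⟩, fun x => ?_⟩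
  · obtain ⟨ε, hε, u, v, hRu, hLv, _⟩ := max_slopes he0 he1 x
    exact ⟨ε, hε, u, v, hRu, hLv⟩
  · obtain ⟨ε, hε, u, v, hRu, hLv, hvu⟩ := max_slopes he0 he1 x
    have hsr : sR (fun x => max (h0 x) (h1 x)) x = u := slope_right hε hRu
    have hsl : sL (fun x => max (h0 x) (h1 x)) x = v := slope_left hε hLv
    rw [omega_eq, hsr, hsl]
    linarith

end TropNev
end

open TropNev Filter MeasureTheory Topology
/-- δ_f(a) = 0 for every finite a with f⊕a ≢ a. -/
theorem stmt17 (f0 f1 : ℝ → ℝ) (hred : ReducedPair f0 f1)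
    (f : ℝ → ℝ) (hfdef : f = fun x => f1 x - f0 x)
    (hnc : ¬ ∃ k : ℝ, ∀ x : ℝ, f x = k)
    (hgrow : LimsupZero fun r => Real.log (charT2 f0 f1 r) / r) :
    ∀ a : ℝ, (¬ ∀ x : ℝ, max (f x) a = a) →
      1 - Filter.limsup
          (fun r => countNroots (fun x => max (a + f0 x) (f1 x)) r / charT2 f0 f1 r)
          Filter.atTop = 0 := by
  intro a _
  obtain ⟨hf0e, hf1e, _⟩ := hred
  have hge : IsTropEntire (fun x => max (a + f0 x) (f1 x)) :=
    entire_max (entire_const_add hf0e a) hf1e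
  have hMe : IsTropEntire (fun x => max (f0 x) (f1 x)) := entire_max hf0e hf1e
  set M : ℝ → ℝ := fun x => max (f0 x) (f1 x) with hMdef
  set g : ℝ → ℝ := fun x => max (a + f0 x) (f1 x) with hgdef
  have hchar : ∀ r, charT2 f0 f1 r = (M r + M (-r)) / 2 - M 0 := fun r => rfl
  -- M has a kink
  have hkink : ∃ b, omega M b ≠ 0 := by
    by_contra hno
    push_neg at hno
    have haffM : ∀ y, M y = M 0 + sR M 0 * y := by
      intro y
      rcases le_total 0 y with hy | hy
      · obtain ⟨K, hK⟩ := exists_kinkset hMe.1 0 y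
        have := lemA hMe.1 K 0 y hy hK
        have hz : ∑ b ∈ K, omega M b * (y - b) = 0 :=
          Finset.sum_eq_zero fun b _ => by rw [hno b]; ring
        rw [hz] at this
        linarith
      · obtain ⟨K, hK⟩ := exists_kinkset hMe.1 y 0
        have := lemA' hMe.1 K y 0 hy hK
        have hz : ∑ b ∈ K, omega M b * (b - y) = 0 :=
          Finset.sum_eq_zero fun b _ => by rw [hno b]; ring
        have hsl : sL M 0 = sR M 0 := by
          have := hno 0
          rw [omega_eq] at this
          linarith
        rw [hz, hsl] at this
        linarith
    have hf0aff := entire_le_affine hf0e (M 0) (sR M 0)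
      (fun x => by have h1 := le_max_left (f0 x) (f1 x); rw [← haffM x]; exact h1)
    have hf1aff := entire_le_affine hf1e (M 0) (sR M 0)
      (fun x => by have h1 := le_max_right (f0 x) (f1 x); rw [← haffM x]; exact h1)
    apply hnc
    refine ⟨f 0, fun x => ?_⟩
    have h0 := hf0aff 0 x
    have h1 := hf1aff 0 x
    rw [hfdef]
    simp only
    have hx0 : f 0 = f1 0 - f0 0 := by rw [hfdef]
    linarith
  obtain ⟨b₀, hb₀⟩ := hkink
  have hb₀pos : 0 < omega M b₀ := lt_of_le_of_ne (hMe.2 b₀) (Ne.symm hb₀)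
  -- T lower bound and tendsto
  have hTlb : ∀ r : ℝ, |b₀| < r → omega M b₀ / 2 * (r - |b₀|) ≤ charT2 f0 f1 r := by
    intro r hr
    have hrpos : 0 < r := lt_of_le_of_lt (abs_nonneg b₀) hr
    obtain ⟨K, hK⟩ := exists_kinkset hMe.1 (-r) r
    have hjs := jensen_sum hMe.1 hrpos K hK
    have hb₀K : b₀ ∈ K := (hK b₀).2 ⟨abs_lt.1 hr, hb₀⟩
    have hterm : omega M b₀ * (r - |b₀|) ≤ ∑ b ∈ K, omega M b * (r - |b|) := by
      apply Finset.single_le_sum _ hb₀K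
      intro b hb
      obtain ⟨hbIoo, _⟩ := (hK b).1 hb
      have : |b| < r := abs_lt.2 hbIoo
      exact mul_nonneg (hMe.2 b) (by linarith)
    rw [hchar r]
    linarith
  have hT : Tendsto (fun r => charT2 f0 f1 r) atTop atTop := by
    have hlow : Tendsto (fun r : ℝ => omega M b₀ / 2 * (r - |b₀|)) atTop atTop := by
      apply Tendsto.const_mul_atTop (by linarith : (0:ℝ) < omega M b₀ / 2)
      exact tendsto_atTop_add_const_right _ _ tendsto_id
    apply tendsto_atTop_mono' atTop _ hlow
    filter_upwards [eventually_gt_atTop |b₀|] with r hr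
    exact hTlb r hr
  -- bound |N - T|
  have hbound : ∀ x, |g x - M x| ≤ |a| := by
    intro x
    rw [hgdef, hMdef]
    simp only
    have := abs_max_sub_max_le_max (a + f0 x) (f1 x) (f0 x) (f1 x)
    simp only [add_sub_cancel_right, sub_self, abs_zero] at this
    simpa [max_eq_left (abs_nonneg a)] using this
  have hNT : ∀ᶠ r : ℝ in atTop, |countNroots g r - charT2 f0 f1 r| ≤ 2 * |a| := by
    filter_upwards [eventually_gt_atTop 0] with r hr
    rw [countNroots_jensen hge hr, hchar r]
    have h1 := hbound r
    have h2 := hbound (-r)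
    have h3 := hbound 0
    rw [abs_le] at h1 h2 h3 ⊢
    constructor <;> [linarith [h1.1, h2.1, h3.2]; linarith [h1.2, h2.2, h3.1]]
  -- ratio tends to 1
  have hdiff : Tendsto (fun r => (countNroots g r - charT2 f0 f1 r) / charT2 f0 f1 r)
      atTop (𝓝 0) := by
    have hb2 : Tendsto (fun r => 2 * |a| / charT2 f0 f1 r) atTop (𝓝 0) :=
      Tendsto.div_atTop tendsto_const_nhds hT
    apply squeeze_zero_norm' _ hb2
    filter_upwards [hNT, hT.eventually_gt_atTop 0] with r h1 h2
    rw [Real.norm_eq_abs, abs_div, abs_of_pos h2]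
    gcongr
  have hlim : Tendsto (fun r => countNroots g r / charT2 f0 f1 r) atTop (𝓝 1) := by
    have h1 : Tendsto (fun r => (countNroots g r - charT2 f0 f1 r) / charT2 f0 f1 r + 1)
        atTop (𝓝 1) := by
      have := hdiff.add (tendsto_const_nhds (x := (1:ℝ)) (f := atTop))
      simpa using this
    apply h1.congr'
    filter_upwards [hT.eventually_gt_atTop 0] with r hr
    field_simp
    ring
  rw [hlim.limsup_eq]
  ring
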